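/- cov(M) ≤ 𝔡_⋔ and 𝔡_⋔ ≤ non(N): on Cantor space, the covering number of the meager ideal is at most 𝔡_⋔, which in turn is at most the uniformity of the null ideal. -/

import Mathlib

open Cardinal Set Filter MeasureTheory

/-- The `n`-th block of the fixed interval partition of `ℕ` into consecutive finite
intervals with `|I_n| = 2^(n+1)`: `I n = [2^(n+1) - 2, 2^(n+2) - 2)`. -/
def Iblock (n : ℕ) : Finset ℕ := Finset.Ico (2 ^ (n + 1) - 2) (2 ^ (n + 2) - 2)

/-- `f ⋔ g`: `f ↾ I_k ≠ g ↾ I_k` for all but finitely many `k`. -/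
def Pitch (f g : ℕ → Bool) : Prop :=
  ∀ᶠ k in Filter.atTop, ∃ i ∈ Iblock k, f i ≠ g i

/-- `μ` is the uniform product probability measure on Cantor space `2^ω`
(each coordinate uniform on `{0,1}`), characterized by its values on cylinders. -/
def IsUniformProductMeasure (μ : Measure (ℕ → Bool)) : Prop :=
  IsProbabilityMeasure μ ∧
  ∀ s : Finset ℕ, ∀ g : ℕ → Bool,
    μ { f : ℕ → Bool | ∀ i ∈ s, f i = g i } = (1 / 2 : ENNReal) ^ s.card

/-- `𝔡_⋔`: the least cardinality of a family `D ⊆ 2^ω` such that for every `f ∈ 2^ω`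
some `g ∈ D` satisfies `f ⋔ g`. -/
noncomputable def dPitch : Cardinal :=
  sInf { c | ∃ D : Set (ℕ → Bool), (∀ f : ℕ → Bool, ∃ g ∈ D, Pitch f g) ∧ #D = c }

/-- `cov(M)` on Cantor space: the least cardinality of a family of meager subsets of
`2^ω` whose union covers `2^ω`. -/
noncomputable def covMeagerCantor : Cardinal :=
  sInf { c | ∃ F : Set (Set (ℕ → Bool)), (∀ s ∈ F, IsMeagre s) ∧ ⋃₀ F = Set.univ ∧ #F = c }

/-- `non(N)` on Cantor space: the least cardinality of a subset of `2^ω` that is not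
`μ`-null. -/
noncomputable def nonNullCantor (μ : Measure (ℕ → Bool)) : Cardinal :=
  sInf { c | ∃ S : Set (ℕ → Bool), μ S ≠ 0 ∧ #S = c }

/- ### Auxiliary lemmas -/

lemma two_le_pow_succ (k : ℕ) : 2 ≤ 2 ^ (k + 1) := by
  calc 2 = 2 ^ 1 := rfl
  _ ≤ 2 ^ (k + 1) := Nat.pow_le_pow_right (by norm_num) (by omega)

lemma Iblock_nonempty (k : ℕ) : (Iblock k).Nonempty := by
  have h1 := two_le_pow_succ k
  have h2 : 2 ^ (k + 2) = 2 ^ (k + 1) * 2 := by ring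
  rw [Iblock, Finset.nonempty_Ico]
  omega

lemma le_of_mem_Iblock {k i : ℕ} (hi : i ∈ Iblock k) : k ≤ i := by
  rw [Iblock, Finset.mem_Ico] at hi
  have : k + 2 ≤ 2 ^ (k + 1) := by
    have := Nat.lt_two_pow_self (n := k + 1)
    omega
  omega

lemma card_Iblock (k : ℕ) : (Iblock k).card = 2 ^ (k + 1) := by
  have h1 := two_le_pow_succ k
  have h2 : 2 ^ (k + 2) = 2 ^ (k + 1) * 2 := by ring
  rw [Iblock, Nat.card_Ico]
  omega

/-- The closed pieces whose union is the pitch set. -/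
def Ablock (m : ℕ) (g : ℕ → Bool) : Set (ℕ → Bool) :=
  {f | ∀ k, m ≤ k → ∃ i ∈ Iblock k, f i ≠ g i}

lemma isClosed_Ablock (m : ℕ) (g : ℕ → Bool) : IsClosed (Ablock m g) := by
  have : Ablock m g =
      ⋂ k, ⋂ (_ : m ≤ k), ⋃ i ∈ Iblock k, {f : ℕ → Bool | f i ≠ g i} := by
    ext f; simp [Ablock]
  rw [this]
  refine isClosed_iInter fun k => isClosed_iInter fun _ => ?_
  refine Set.Finite.isClosed_biUnion (Iblock k).finite_toSet fun i _ => ?_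
  have : {f : ℕ → Bool | f i ≠ g i} = (fun f : ℕ → Bool => f i) ⁻¹' {x : Bool | x ≠ g i} := rfl
  rw [this]
  exact (isClosed_discrete {x : Bool | x ≠ g i}).preimage (continuous_apply i)

lemma isNowhereDense_Ablock (m : ℕ) (g : ℕ → Bool) : IsNowhereDense (Ablock m g) := by
  rw [(isClosed_Ablock m g).isNowhereDense_iff]
  rw [Set.eq_empty_iff_forall_notMem]
  intro f hf
  obtain ⟨I, u, hu, hsub⟩ := isOpen_pi_iff.mp isOpen_interior f hf
  set k : ℕ := max m (I.sup id + 1) with hk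
  set h : ℕ → Bool := fun i => if i ∈ Iblock k then g i else f i with hh
  have hIk : ∀ a ∈ I, a ∉ Iblock k := by
    intro a ha hmem
    have h1 : k ≤ a := le_of_mem_Iblock hmem
    have h2 : a ≤ I.sup id := Finset.le_sup (f := id) ha
    omega
  have hmem : h ∈ (I : Set ℕ).pi u := by
    intro a ha
    have : h a = f a := by simp only [hh, if_neg (hIk a ha)]
    rw [this]
    exact (hu a ha).2
  have hA : h ∈ Ablock m g := interior_subset (hsub hmem)
  obtain ⟨i, hi, hne⟩ := hA k (le_max_left _ _)
  exact hne (by simp only [hh, if_pos hi])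

lemma isMeagre_pitchSet (g : ℕ → Bool) : IsMeagre {f : ℕ → Bool | Pitch f g} := by
  rw [isMeagre_iff_countable_union_isNowhereDense]
  refine ⟨Set.range (fun m => Ablock m g), ?_, countable_range _, ?_⟩
  · rintro t ⟨m, rfl⟩
    exact isNowhereDense_Ablock m g
  · intro f hf
    obtain ⟨m, hm⟩ := eventually_atTop.mp hf
    exact ⟨Ablock m g, ⟨m, rfl⟩, hm⟩

lemma measure_notPitch {μ : Measure (ℕ → Bool)} (hμ : IsUniformProductMeasure μ)
    (f : ℕ → Bool) : μ {g : ℕ → Bool | ¬ Pitch f g} = 0 := by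
  set C : ℕ → Set (ℕ → Bool) := fun k => {g | ∀ i ∈ Iblock k, g i = f i} with hC
  have hsub : {g : ℕ → Bool | ¬ Pitch f g} ⊆ limsup C atTop := by
    intro g hg
    rw [limsup_eq_iInf_iSup_of_nat]
    simp only [iInf_eq_iInter, iSup_eq_iUnion, Set.mem_iInter, Set.mem_iUnion]
    intro n
    rw [Set.mem_setOf_eq, Pitch, Filter.not_eventually] at hg
    obtain ⟨k, hk, hk2⟩ := (frequently_atTop.mp hg) n
    push_neg at hk2
    exact ⟨k, hk, fun i hi => (hk2 i hi).symm⟩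
  have hval : ∀ k, μ (C k) = (1 / 2 : ENNReal) ^ (2 ^ (k + 1)) := by
    intro k
    have := hμ.2 (Iblock k) f
    rwa [card_Iblock] at this
  have hsum : ∑' k, μ (C k) ≠ ⊤ := by
    have hle : ∑' k, μ (C k) ≤ ∑' k : ℕ, (1 / 2 : ENNReal) ^ k := by
      refine ENNReal.tsum_le_tsum fun k => ?_
      rw [hval k]
      have hk : k ≤ 2 ^ (k + 1) :=
        le_trans (Nat.lt_two_pow_self (n := k)).le (Nat.pow_le_pow_right (by norm_num) (by omega))
      exact pow_le_pow_right_of_le_one' (by norm_num) hk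
    refine ne_top_of_le_ne_top ?_ hle
    rw [ENNReal.tsum_geometric]
    rw [ENNReal.inv_ne_top]
    have : (1 / 2 : ENNReal) < 1 := by
      rw [one_div]; exact ENNReal.one_half_lt_one
    exact (tsub_pos_of_lt this).ne'
  exact measure_mono_null hsub (measure_limsup_atTop_eq_zero hsum)

/-- `cov(M) ≤ 𝔡_⋔ ≤ non(N)` on Cantor space. -/
theorem covMeager_le_dPitch_le_nonNull (μ : Measure (ℕ → Bool))
    (hμ : IsUniformProductMeasure μ) :
    covMeagerCantor ≤ dPitch ∧ dPitch ≤ nonNullCantor μ := by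
  have hpitch_univ : ∀ f : ℕ → Bool, ∃ g ∈ (Set.univ : Set (ℕ → Bool)), Pitch f g := by
    intro f
    refine ⟨fun i => !f i, Set.mem_univ _, Filter.Eventually.of_forall fun k => ?_⟩
    obtain ⟨i, hi⟩ := Iblock_nonempty k
    exact ⟨i, hi, by simp⟩
  constructor
  · -- cov(M) ≤ 𝔡_⋔
    refine le_csInf ⟨_, Set.univ, hpitch_univ, rfl⟩ ?_
    rintro c ⟨D, hD, rfl⟩
    have h1 : covMeagerCantor ≤ #((fun g => {f : ℕ → Bool | Pitch f g}) '' D) := by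
      refine csInf_le (OrderBot.bddBelow _) ⟨_, ?_, ?_, rfl⟩
      · rintro s ⟨g, _, rfl⟩
        exact isMeagre_pitchSet g
      · rw [Set.eq_univ_iff_forall]
        intro f
        obtain ⟨g, hg, hfg⟩ := hD f
        exact ⟨{f' | Pitch f' g}, ⟨g, hg, rfl⟩, hfg⟩
    exact h1.trans (Cardinal.mk_image_le)
  · -- 𝔡_⋔ ≤ non(N)
    have huniv : μ (Set.univ : Set (ℕ → Bool)) ≠ 0 := by
      have := hμ.1
      rw [measure_univ]
      exact one_ne_zero
    refine le_csInf ⟨_, Set.univ, huniv, rfl⟩ ?_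
    rintro c ⟨S, hS, rfl⟩
    refine csInf_le (OrderBot.bddBelow _) ⟨S, fun f => ?_, rfl⟩
    by_contra h
    push_neg at h
    exact hS (measure_mono_null (fun g hg => h g hg) (measure_notPitch hμ f))
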